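/- Given a positive definite density matrix ρ₁₂₃ on H₁⊗H₂⊗H₃ with marginals ρ₁₂, ρ₂₃, ρ₁, ρ₂, ρ₃, and a compatible pair (ρ̃₁₂, ρ̃₂₃), the operator ρ̃₁₂₃ := ρ₁₂₃ + (ρ̃₁₂ − ρ₁₂)⊗ρ̃₃ + ρ̃₁⊗(ρ̃₂₃ − ρ₂₃) + ρ̃₁⊗(ρ₂ − ρ̃₂)⊗ρ̃₃ is Hermitian of trace 1 and satisfies Tr₃ ρ̃₁₂₃ = ρ̃₁₂ and Tr₁ ρ̃₁₂₃ = ρ̃₂₃, where ρ̃₁ = Tr₂ ρ̃₁₂, ρ̃₂ = Tr₁ ρ̃₁₂ = Tr₃ ρ̃₂₃, ρ̃₃ = Tr₂ ρ̃₂₃. -/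
import Mathlib


open Matrix Kronecker BigOperators
open scoped ComplexOrder
noncomputable section

/-- A density matrix: positive semidefinite with trace one. -/
def IsDensityMatrix {n : Type*} [Fintype n] (ρ : Matrix n n ℂ) : Prop :=
  ρ.PosSemidef ∧ ρ.trace = 1

/-- Partial trace over the second (right) tensor factor. -/
def ptraceRight {A B : Type*} [Fintype B] (ρ : Matrix (A × B) (A × B) ℂ) :
    Matrix A A ℂ :=
  Matrix.of fun x y => ∑ k, ρ (x, k) (y, k)

/-- Partial trace over the first (left) tensor factor. -/
def ptraceLeft {A B : Type*} [Fintype A] (ρ : Matrix (A × B) (A × B) ℂ) :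
    Matrix B B ℂ :=
  Matrix.of fun x y => ∑ k, ρ (k, x) (k, y)

/-- Partial trace over the first factor of a tripartite state indexed by `(A × B) × C`. -/
def ptrace1of3 {A B C : Type*} [Fintype A]
    (ρ : Matrix ((A × B) × C) ((A × B) × C) ℂ) : Matrix (B × C) (B × C) ℂ :=
  Matrix.of fun x y => ∑ j, ρ ((j, x.1), x.2) ((j, y.1), y.2)

/-- Partial trace over the first and third factors. -/
def ptrace13 {A B C : Type*} [Fintype A] [Fintype C]
    (ρ : Matrix ((A × B) × C) ((A × B) × C) ℂ) : Matrix B B ℂ :=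
  Matrix.of fun x y => ∑ j, ∑ k, ρ ((j, x), k) ((j, y), k)

/-- The von Neumann entropy `S(ρ) = -Tr (ρ log ρ)`, computed via eigenvalues. -/
def vnEntropy {n : Type*} [Fintype n] [DecidableEq n] (ρ : Matrix n n ℂ) : ℝ :=
  if h : ρ.IsHermitian then -∑ i, h.eigenvalues i * Real.log (h.eigenvalues i) else 0

/-- The tensor product M ⊗ N of M on H₁ and N on H₂⊗H₃, indexed by (A × B) × C. -/
def kron1of3 {A B C : Type*} (M : Matrix A A ℂ) (N : Matrix (B × C) (B × C) ℂ) :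
    Matrix ((A × B) × C) ((A × B) × C) ℂ :=
  Matrix.of fun x y => M x.1.1 y.1.1 * N (x.1.2, x.2) (y.1.2, y.2)


section Aux
variable {A B C : Type*} [Fintype A] [Fintype B] [Fintype C]

lemma ptraceRight_add (M N : Matrix (A × B) (A × B) ℂ) :
    ptraceRight (M + N) = ptraceRight M + ptraceRight N := by
  ext x y; simp [ptraceRight, Finset.sum_add_distrib]

lemma ptraceRight_sub (M N : Matrix (A × B) (A × B) ℂ) :
    ptraceRight (M - N) = ptraceRight M - ptraceRight N := by
  ext x y; simp [ptraceRight, Finset.sum_sub_distrib]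

lemma ptraceLeft_sub (M N : Matrix (A × B) (A × B) ℂ) :
    ptraceLeft (M - N) = ptraceLeft M - ptraceLeft N := by
  ext x y; simp [ptraceLeft, Finset.sum_sub_distrib]

lemma ptrace1of3_add (M N : Matrix ((A × B) × C) ((A × B) × C) ℂ) :
    ptrace1of3 (M + N) = ptrace1of3 M + ptrace1of3 N := by
  ext x y; simp [ptrace1of3, Finset.sum_add_distrib]

lemma ptraceRight_herm {M : Matrix (A × B) (A × B) ℂ} (h : M.IsHermitian) :
    (ptraceRight M).IsHermitian := by
  ext x y
  simp only [Matrix.conjTranspose_apply, ptraceRight, Matrix.of_apply, star_sum]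
  exact Finset.sum_congr rfl fun k _ => h.apply _ _

lemma ptraceLeft_herm {M : Matrix (A × B) (A × B) ℂ} (h : M.IsHermitian) :
    (ptraceLeft M).IsHermitian := by
  ext x y
  simp only [Matrix.conjTranspose_apply, ptraceLeft, Matrix.of_apply, star_sum]
  exact Finset.sum_congr rfl fun k _ => h.apply _ _

lemma ptrace1of3_herm {M : Matrix ((A × B) × C) ((A × B) × C) ℂ} (h : M.IsHermitian) :
    (ptrace1of3 M).IsHermitian := by
  ext x y
  simp only [Matrix.conjTranspose_apply, ptrace1of3, Matrix.of_apply, star_sum]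
  exact Finset.sum_congr rfl fun k _ => h.apply _ _

lemma kron_herm {m n : Type*} {M : Matrix m m ℂ} {N : Matrix n n ℂ}
    (hM : M.IsHermitian) (hN : N.IsHermitian) : (M ⊗ₖ N).IsHermitian := by
  ext ⟨a, b⟩ ⟨c, d⟩
  simp only [Matrix.conjTranspose_apply, Matrix.kroneckerMap_apply, star_mul']
  rw [hM.apply, hN.apply]

lemma kron1of3_herm {M : Matrix A A ℂ} {N : Matrix (B × C) (B × C) ℂ}
    (hM : M.IsHermitian) (hN : N.IsHermitian) : (kron1of3 M N).IsHermitian := by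
  ext ⟨⟨a, b⟩, c⟩ ⟨⟨a', b'⟩, c'⟩
  simp only [Matrix.conjTranspose_apply, kron1of3, Matrix.of_apply, star_mul']
  rw [hM.apply, hN.apply]

lemma trace_ptraceRight (M : Matrix (A × B) (A × B) ℂ) :
    (ptraceRight M).trace = M.trace := by
  rw [Matrix.trace, Matrix.trace]
  simp only [ptraceRight, Matrix.diag, Matrix.of_apply, Fintype.sum_prod_type]

lemma trace_ptraceLeft (M : Matrix (A × B) (A × B) ℂ) :
    (ptraceLeft M).trace = M.trace := by
  rw [Matrix.trace, Matrix.trace]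
  simp only [ptraceLeft, Matrix.diag, Matrix.of_apply, Fintype.sum_prod_type]
  exact Finset.sum_comm

lemma trace_ptrace1of3 (M : Matrix ((A × B) × C) ((A × B) × C) ℂ) :
    (ptrace1of3 M).trace = M.trace := by
  rw [Matrix.trace, Matrix.trace]
  simp only [ptrace1of3, Matrix.diag, Matrix.of_apply, Fintype.sum_prod_type]
  exact (Finset.sum_congr rfl fun _ _ => Finset.sum_comm).trans Finset.sum_comm

lemma trace_kron1of3 (M : Matrix A A ℂ) (N : Matrix (B × C) (B × C) ℂ) :
    (kron1of3 M N).trace = M.trace * N.trace := by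
  simp only [Matrix.trace, kron1of3, Matrix.diag, Matrix.of_apply, Fintype.sum_prod_type,
    Finset.mul_sum, Finset.sum_mul]
  exact Finset.sum_comm.trans (Finset.sum_congr rfl fun _ _ => Finset.sum_comm)

lemma ptraceRight_kron (X : Matrix (A × B) (A × B) ℂ) (Y : Matrix C C ℂ) :
    ptraceRight (X ⊗ₖ Y) = Y.trace • X := by
  ext x y
  simp only [ptraceRight, Matrix.of_apply, Matrix.kroneckerMap_apply, Matrix.smul_apply,
    Matrix.trace, Matrix.diag, smul_eq_mul]
  rw [Finset.sum_mul]
  exact Finset.sum_congr rfl fun k _ => mul_comm _ _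

lemma ptraceRight_kron1of3 (M : Matrix A A ℂ) (N : Matrix (B × C) (B × C) ℂ) :
    ptraceRight (kron1of3 M N) = M ⊗ₖ ptraceRight N := by
  ext ⟨a, b⟩ ⟨c, d⟩
  simp [ptraceRight, kron1of3, Finset.mul_sum]

lemma ptrace1of3_kron (X : Matrix (A × B) (A × B) ℂ) (Y : Matrix C C ℂ) :
    ptrace1of3 (X ⊗ₖ Y) = ptraceLeft X ⊗ₖ Y := by
  ext x y
  simp [ptrace1of3, ptraceLeft, Finset.sum_mul]

lemma ptrace1of3_kron1of3 (M : Matrix A A ℂ) (N : Matrix (B × C) (B × C) ℂ) :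
    ptrace1of3 (kron1of3 M N) = M.trace • N := by
  ext x y
  simp [ptrace1of3, kron1of3, Matrix.trace, Matrix.diag, Finset.sum_mul]

lemma ptraceLeft_kron (M : Matrix A A ℂ) (X : Matrix B B ℂ) :
    ptraceLeft (M ⊗ₖ X) = M.trace • X := by
  ext x y
  simp [ptraceLeft, Matrix.trace, Matrix.diag, Finset.sum_mul]

lemma ptraceRight_ptrace1of3 (M : Matrix ((A × B) × C) ((A × B) × C) ℂ) :
    ptraceRight (ptrace1of3 M) = ptraceLeft (ptraceRight M) := by
  ext x y
  simp only [ptraceRight, ptraceLeft, ptrace1of3, Matrix.of_apply]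
  exact Finset.sum_comm

lemma kron_sub_left {m n : Type*} (X Y : Matrix m m ℂ) (M : Matrix n n ℂ) :
    (X - Y) ⊗ₖ M = X ⊗ₖ M - Y ⊗ₖ M := by
  ext a b; simp [Matrix.kroneckerMap_apply, sub_mul]

lemma kron_sub {m n : Type*} (M : Matrix m m ℂ) (X Y : Matrix n n ℂ) :
    M ⊗ₖ (X - Y) = M ⊗ₖ X - M ⊗ₖ Y := by
  ext a b; simp [Matrix.kroneckerMap_apply, mul_sub]

end Aux

/-- The explicit perturbed extension is Hermitian, has trace 1, and has the prescribed
marginals. -/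
theorem stmt3 {A B C : Type*} [Fintype A] [Fintype B] [Fintype C]
    (ρ₁₂₃ : Matrix ((A × B) × C) ((A × B) × C) ℂ)
    (h123 : IsDensityMatrix ρ₁₂₃) (hpd : ρ₁₂₃.PosDef)
    (t12 : Matrix (A × B) (A × B) ℂ) (t23 : Matrix (B × C) (B × C) ℂ)
    (ht12 : IsDensityMatrix t12) (ht23 : IsDensityMatrix t23)
    (hcomp : ptraceLeft t12 = ptraceRight t23)
    (E : Matrix ((A × B) × C) ((A × B) × C) ℂ)
    (hE : E = ρ₁₂₃ + (t12 - ptraceRight ρ₁₂₃) ⊗ₖ ptraceLeft t23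
        + kron1of3 (ptraceRight t12) (t23 - ptrace1of3 ρ₁₂₃)
        + (ptraceRight t12 ⊗ₖ (ptraceLeft (ptraceRight ρ₁₂₃) - ptraceLeft t12))
            ⊗ₖ ptraceLeft t23) :
    E.IsHermitian ∧ E.trace = 1 ∧ ptraceRight E = t12 ∧ ptrace1of3 E = t23 := by
  obtain ⟨⟨hρH, -⟩, hρtr⟩ := h123
  obtain ⟨⟨h12H, -⟩, h12tr⟩ := ht12
  obtain ⟨⟨h23H, -⟩, h23tr⟩ := ht23
  have h3tr : (ptraceLeft t23).trace = 1 := by rw [trace_ptraceLeft, h23tr]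
  have h1tr : (ptraceRight t12).trace = 1 := by rw [trace_ptraceRight, h12tr]
  have h12m : (ptraceRight ρ₁₂₃).trace = 1 := by rw [trace_ptraceRight, hρtr]
  have h23m : (ptrace1of3 ρ₁₂₃).trace = 1 := by rw [trace_ptrace1of3, hρtr]
  have h2m : (ptraceLeft (ptraceRight ρ₁₂₃)).trace = 1 := by
    rw [trace_ptraceLeft, h12m]
  have h2t : (ptraceLeft t12).trace = 1 := by rw [trace_ptraceLeft, h12tr]
  refine ⟨?_, ?_, ?_, ?_⟩
  · rw [hE]
    exact (((hρH.add (kron_herm (h12H.sub (ptraceRight_herm hρH))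
        (ptraceLeft_herm h23H))).add (kron1of3_herm (ptraceRight_herm h12H)
        (h23H.sub (ptrace1of3_herm hρH)))).add
        (kron_herm (kron_herm (ptraceRight_herm h12H)
          ((ptraceLeft_herm (ptraceRight_herm hρH)).sub (ptraceLeft_herm h12H)))
          (ptraceLeft_herm h23H)))
  · rw [hE]
    rw [Matrix.trace_add, Matrix.trace_add, Matrix.trace_add, Matrix.trace_kronecker,
      Matrix.trace_kronecker, Matrix.trace_kronecker, trace_kron1of3,
      Matrix.trace_sub, Matrix.trace_sub, Matrix.trace_sub,
      hρtr, h12tr, h3tr, h1tr, h12m, h23m, h23tr, h2m, h2t]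
    ring
  · rw [hE, ptraceRight_add, ptraceRight_add, ptraceRight_add,
      ptraceRight_kron, ptraceRight_kron, ptraceRight_kron1of3, h3tr,
      ptraceRight_sub, ptraceRight_ptrace1of3, ← hcomp]
    rw [one_smul, one_smul, kron_sub, kron_sub]
    abel
  · rw [hE, ptrace1of3_add, ptrace1of3_add, ptrace1of3_add,
      ptrace1of3_kron, ptrace1of3_kron, ptrace1of3_kron1of3, h1tr,
      ptraceLeft_sub, ptraceLeft_kron, h1tr, one_smul, one_smul]
    rw [kron_sub_left, kron_sub_left]
    abel
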